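/- Let (S_j) be a sequence of pairwise disjoint measurable sets with 0 < μ(S_j) < ∞, and let p: Ω → [1,∞) satisfy p(t) ≥ p_j on S_j, where (1+1/j)^{p_j} > 2ʲ. For fixed n, set x_j = 1/(2^{n+1+j} μ(S_j)) and f(t) = Σ_j x_j^{1/p(t)} χ_{S_j}(t). Then ρ(f) = 2^{−(n+1)} and ρ(λf) = +∞ for every λ > 1; consequently ‖f‖ = 1 in the Luxemburg norm. -/

import Mathlib

open MeasureTheory
open scoped ENNReal

/-- The Luxemburg norm associated to the variable exponent modular
`ρ(g) = ∫ |g(t)|^{p(t)} dμ`. -/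
noncomputable def luxemburgNorm {Ω : Type*} [MeasurableSpace Ω]
    (μ : Measure Ω) (p : Ω → ℝ) (g : Ω → ℝ) : ℝ :=
  sInf {α : ℝ | 0 < α ∧ ∫⁻ t, ENNReal.ofReal (|g t / α| ^ p t) ∂μ ≤ 1}

/-- The building block of the isometric copy of `ℓ∞` in `L^{p(·)}(Ω)`.
Here `S j` plays the role of the set `S_{r_n^{j+1}}` of the paper (the index `j`
runs from `1` in the paper, hence the shifts `j+1`), `x j` is the constant
`x_{n,j+1} = 1/(2^{n+1+(j+1)} μ(S_{j+1}))` and `f(t) = Σ_j x_j^{1/p(t)} χ_{S_j}(t)`. -/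
theorem modular_value_and_norm_one_of_block
    {Ω : Type*} [MeasurableSpace Ω] (μ : Measure Ω) [SigmaFinite μ]
    (p : Ω → ℝ) (hp : Measurable p) (hp1 : ∀ t, 1 ≤ p t)
    (S : ℕ → Set Ω) (hSm : ∀ j, MeasurableSet (S j))
    (hSdisj : Pairwise (Function.onFun Disjoint S))
    (hSpos : ∀ j, 0 < μ (S j)) (hSfin : ∀ j, μ (S j) < ⊤)
    (pj : ℕ → ℝ)
    (hplow : ∀ j, ∀ t ∈ S j, pj j ≤ p t)
    (hpgrowth : ∀ j : ℕ, (2 : ℝ) ^ (j + 1) < (1 + 1 / ((j : ℝ) + 1)) ^ pj j)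
    (n : ℕ) (x : ℕ → ℝ)
    (hxdef : ∀ j, x j = 1 / (2 ^ (n + 2 + j) * (μ (S j)).toReal))
    (f : Ω → ℝ)
    (hfdef : ∀ t, f t = ∑' j, Set.indicator (S j) (fun s => x j ^ (1 / p s)) t) :
    (∫⁻ t, ENNReal.ofReal (|f t| ^ p t) ∂μ = ENNReal.ofReal (1 / 2 ^ (n + 1))) ∧
    (∀ l : ℝ, 1 < l → ∫⁻ t, ENNReal.ofReal (|l * f t| ^ p t) ∂μ = ⊤) ∧
    luxemburgNorm μ p f = 1 := by
  have hμpos : ∀ j, 0 < (μ (S j)).toReal :=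
    fun j => ENNReal.toReal_pos (hSpos j).ne' (hSfin j).ne
  have hxpos : ∀ j, 0 < x j := by
    intro j; rw [hxdef j]
    have := hμpos j; positivity
  have hpt0 : ∀ t, p t ≠ 0 := fun t => by have := hp1 t; linarith
  have hnotmem : ∀ j, ∀ t ∈ S j, ∀ i, i ≠ j → t ∉ S i := by
    intro j t ht i hij hti
    exact (Set.disjoint_left.mp (hSdisj hij)) hti ht
  have hf_mem : ∀ j, ∀ t ∈ S j, f t = x j ^ (1 / p t) := by
    intro j t ht
    rw [hfdef t, tsum_eq_single j
      (fun i hij => Set.indicator_of_notMem (hnotmem j t ht i hij) _)]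
    exact Set.indicator_of_mem ht _
  have hf_not : ∀ t, (∀ j, t ∉ S j) → f t = 0 := by
    intro t ht
    rw [hfdef t]
    convert tsum_zero with j
    exact Set.indicator_of_notMem (ht j) _
  have hxμ : ∀ j, x j * (μ (S j)).toReal = 1 / 2 ^ (n + 2 + j) := by
    intro j
    have hm := (hμpos j).ne'
    have h2 : (2:ℝ) ^ (n + 2 + j) ≠ 0 := by positivity
    rw [hxdef j]
    field_simp
  have hpj_pos : ∀ j, 0 < pj j := by
    intro j
    by_contra h
    push_neg at h
    have h1 : (1:ℝ) ≤ 1 + 1 / ((j:ℝ) + 1) := by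
      have : (0:ℝ) < (j:ℝ) + 1 := by positivity
      have := one_div_pos.mpr this
      linarith
    have h2 := Real.rpow_le_one_of_one_le_of_nonpos h1 h
    have h3 : (2:ℝ) ≤ 2 ^ (j + 1) := by
      calc (2:ℝ) = 2 ^ 1 := (pow_one 2).symm
      _ ≤ 2 ^ (j + 1) := pow_le_pow_right₀ one_le_two (by omega)
    linarith [hpgrowth j]
  -- Part 1
  have key1 : ∀ t, ENNReal.ofReal (|f t| ^ p t)
      = ∑' j, Set.indicator (S j) (fun _ => ENNReal.ofReal (x j)) t := by
    intro t
    by_cases ht : ∃ j, t ∈ S j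
    · obtain ⟨j, hj⟩ := ht
      rw [tsum_eq_single j
        (fun i hij => Set.indicator_of_notMem (hnotmem j t hj i hij) _),
        Set.indicator_of_mem hj, hf_mem j t hj]
      congr 1
      rw [abs_of_nonneg (Real.rpow_nonneg (hxpos j).le _),
        ← Real.rpow_mul (hxpos j).le, one_div_mul_cancel (hpt0 t), Real.rpow_one]
    · push_neg at ht
      rw [hf_not t ht, abs_zero, Real.zero_rpow (hpt0 t), ENNReal.ofReal_zero]
      symm
      convert tsum_zero with j
      exact Set.indicator_of_notMem (ht j) _
  have hρf : ∫⁻ t, ENNReal.ofReal (|f t| ^ p t) ∂μ = ENNReal.ofReal (1 / 2 ^ (n + 1)) := by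
    have hgeo : ∑' j : ℕ, ((1:ℝ)/2) ^ j = 2 := by
      rw [tsum_geometric_of_lt_one (by norm_num) (by norm_num)]; norm_num
    have heq : ∀ j : ℕ, (1:ℝ) / 2 ^ (n + 2 + j) = (1/2) ^ (n+2) * (1/2) ^ j := by
      intro j
      rw [← pow_add, div_pow, one_pow]
    have hsummable : Summable (fun j : ℕ => (1:ℝ) / 2 ^ (n + 2 + j)) := by
      simp_rw [heq]
      exact (summable_geometric_of_lt_one (by norm_num) (by norm_num)).mul_left _
    calc ∫⁻ t, ENNReal.ofReal (|f t| ^ p t) ∂μ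
        = ∫⁻ t, ∑' j, Set.indicator (S j) (fun _ => ENNReal.ofReal (x j)) t ∂μ := by
          simp_rw [key1]
      _ = ∑' j, ∫⁻ t, Set.indicator (S j) (fun _ => ENNReal.ofReal (x j)) t ∂μ :=
          lintegral_tsum (fun j => (measurable_const.indicator (hSm j)).aemeasurable)
      _ = ∑' j, ENNReal.ofReal (x j) * μ (S j) := by
          refine tsum_congr fun j => ?_
          rw [lintegral_indicator (hSm j), setLIntegral_const]
      _ = ∑' j, ENNReal.ofReal ((1:ℝ) / 2 ^ (n + 2 + j)) := by
          refine tsum_congr fun j => ?_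
          rw [← ENNReal.ofReal_toReal (hSfin j).ne, ← ENNReal.ofReal_mul (hxpos j).le, hxμ j]
      _ = ENNReal.ofReal (∑' j : ℕ, (1:ℝ) / 2 ^ (n + 2 + j)) :=
          (ENNReal.ofReal_tsum_of_nonneg (fun j => by positivity) hsummable).symm
      _ = ENNReal.ofReal (1 / 2 ^ (n + 1)) := by
          congr 1
          calc ∑' j : ℕ, (1:ℝ) / 2 ^ (n + 2 + j)
              = ∑' j : ℕ, (1/2:ℝ) ^ (n+2) * (1/2) ^ j := tsum_congr heq
            _ = (1/2:ℝ) ^ (n+2) * ∑' j : ℕ, (1/2:ℝ) ^ j := tsum_mul_left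
            _ = 1 / 2 ^ (n + 1) := by
                rw [hgeo, div_pow, one_pow, pow_succ]
                have : (2:ℝ) ^ (n+1) ≠ 0 := by positivity
                field_simp
  -- Part 2
  have key2 : ∀ l : ℝ, 1 < l → ∫⁻ t, ENNReal.ofReal (|l * f t| ^ p t) ∂μ = ⊤ := by
    intro l hl
    obtain ⟨N, hN⟩ := exists_nat_ge (1 / (l - 1))
    have hl1 : (0:ℝ) < l - 1 := by linarith
    have hbase : ∀ j : ℕ, 1 + 1 / (((N + j : ℕ):ℝ) + 1) ≤ l := by
      intro j
      have hk : (N:ℝ) ≤ ((N + j : ℕ):ℝ) := by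
        push_cast
        linarith [show (0:ℝ) ≤ (j:ℝ) by positivity]
      have h2 : 1 / (l - 1) ≤ ((N + j : ℕ):ℝ) + 1 := by linarith
      rw [div_le_iff₀ hl1] at h2
      have hpos : (0:ℝ) < ((N + j : ℕ):ℝ) + 1 := by positivity
      have h3 : 1 / (((N + j : ℕ):ℝ) + 1) ≤ l - 1 := by
        rw [div_le_iff₀ hpos, mul_comm]
        exact h2
      linarith
    set G : ℕ → Ω → ℝ≥0∞ :=
      fun j => (S (N + j)).indicator (fun _ => ENNReal.ofReal (2 ^ (N + j + 1) * x (N + j)))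
      with hG
    have hlow : ∀ t, (∑' j, G j t) ≤ ENNReal.ofReal (|l * f t| ^ p t) := by
      intro t
      by_cases ht : ∃ j, t ∈ S (N + j)
      · obtain ⟨j, hj⟩ := ht
        rw [tsum_eq_single j (fun i hij => Set.indicator_of_notMem
            (hnotmem (N + j) t hj (N + i) (by omega)) _)]
        rw [Set.indicator_of_mem hj]
        apply ENNReal.ofReal_le_ofReal
        have hxj := hxpos (N + j)
        have hfx : f t = x (N + j) ^ (1 / p t) := hf_mem (N + j) t hj
        have hfx_nonneg : (0:ℝ) ≤ x (N + j) ^ (1 / p t) := Real.rpow_nonneg hxj.le _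
        rw [hfx, abs_of_nonneg (by nlinarith : (0:ℝ) ≤ l * x (N + j) ^ (1 / p t)),
          Real.mul_rpow (by linarith) hfx_nonneg,
          ← Real.rpow_mul hxj.le, one_div_mul_cancel (hpt0 t), Real.rpow_one]
        have hchain : (2:ℝ) ^ (N + j + 1) ≤ l ^ p t := by
          have h1 := hpgrowth (N + j)
          have h2 : (1 + 1 / ((((N + j : ℕ)):ℝ) + 1)) ^ pj (N + j) ≤ l ^ pj (N + j) := by
            apply Real.rpow_le_rpow (by positivity) (hbase j) (hpj_pos (N + j)).le
          have h3 : l ^ pj (N + j) ≤ l ^ p t :=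
            Real.rpow_le_rpow_of_exponent_le hl.le (hplow (N + j) t hj)
          push_cast at h1 h2 ⊢
          linarith
        exact mul_le_mul_of_nonneg_right hchain hxj.le
      · push_neg at ht
        have : (∑' j, G j t) = 0 := by
          convert tsum_zero with j
          exact Set.indicator_of_notMem (ht j) _
        rw [this]
        exact zero_le
    have hint : ∀ j : ℕ, ∫⁻ t, G j t ∂μ = ENNReal.ofReal (1 / 2 ^ (n + 1)) := by
      intro j
      rw [lintegral_indicator (hSm (N + j)), setLIntegral_const,
        ← ENNReal.ofReal_toReal (hSfin (N + j)).ne,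
        ← ENNReal.ofReal_mul (mul_nonneg (by positivity) (hxpos _).le), mul_assoc, hxμ (N + j)]
      congr 1
      have hpow : (2:ℝ) ^ (n + 2 + (N + j)) = 2 ^ (n + 1) * 2 ^ (N + j + 1) := by
        rw [← pow_add]
        congr 1
        omega
      rw [hpow]
      have h1 : (2:ℝ) ^ (n+1) ≠ 0 := by positivity
      have h2 : (2:ℝ) ^ (N+j+1) ≠ 0 := by positivity
      field_simp
    have htop : (∑' j, ∫⁻ t, G j t ∂μ) = ⊤ := by
      simp_rw [hint]
      exact ENNReal.tsum_const_eq_top_of_ne_zero (by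
        simp only [ne_eq, ENNReal.ofReal_eq_zero, not_le]
        positivity)
    refine top_le_iff.mp ?_
    calc (⊤ : ℝ≥0∞) = ∑' j, ∫⁻ t, G j t ∂μ := htop.symm
      _ = ∫⁻ t, ∑' j, G j t ∂μ :=
          (lintegral_tsum (fun j => (measurable_const.indicator (hSm (N + j))).aemeasurable)).symm
      _ ≤ ∫⁻ t, ENNReal.ofReal (|l * f t| ^ p t) ∂μ := lintegral_mono hlow
  refine ⟨hρf, key2, ?_⟩
  -- Part 3
  have hmem1 : (1:ℝ) ∈ {α : ℝ | 0 < α ∧ ∫⁻ t, ENNReal.ofReal (|f t / α| ^ p t) ∂μ ≤ 1} := by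
    refine ⟨one_pos, ?_⟩
    simp only [div_one]
    rw [hρf]
    apply ENNReal.ofReal_le_one.mpr
    rw [div_le_one (by positivity)]
    exact one_le_pow₀ one_le_two
  have hlb : ∀ α ∈ {α : ℝ | 0 < α ∧ ∫⁻ t, ENNReal.ofReal (|f t / α| ^ p t) ∂μ ≤ 1},
      (1:ℝ) ≤ α := by
    rintro α ⟨hα, hint⟩
    by_contra h
    push_neg at h
    have hl : 1 < 1 / α := by rw [lt_div_iff₀ hα]; linarith
    have := key2 (1/α) hl
    have heq : ∀ t, f t / α = 1 / α * f t := fun t => by field_simp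
    simp_rw [heq] at hint
    rw [this] at hint
    exact absurd hint (by simp)
  show sInf _ = 1
  apply le_antisymm
  · exact csInf_le ⟨0, fun a ha => ha.1.le⟩ hmem1
  · exact le_csInf ⟨1, hmem1⟩ hlb
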